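/- Let V ⊂ K^e and U ⊂ K^d be open neighborhoods of the origins and φ : V → U an open C¹ map with φ(0) = 0. Let f : U → K be a C¹ function. If the pullback f ∘ φ satisfies a Łojasiewicz gradient inequality with exponent θ ≥ 0 and constant C > 0 on V, then, after possibly shrinking U, the function f satisfies a Łojasiewicz gradient inequality with the same exponent θ and a possibly smaller constant on U. -/

import Mathlib

/-- Łojasiewicz exponents and maps: if `φ : V → U` is an open `C¹` map between neighborhoods
of the origins in `𝕜^e` and `𝕜^d` with `φ(0) = 0`, `f : U → 𝕜` is `C¹`, and the pullback
`f ∘ φ` obeys a Łojasiewicz gradient inequality with exponent `θ ≥ 0` and constant `C > 0` on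
`V`, then after possibly shrinking `U` the function `f` obeys the Łojasiewicz gradient
inequality with the same exponent `θ` and a possibly smaller constant. -/
theorem lojasiewicz_exponent_pushforward {𝕜 : Type*} [RCLike 𝕜] (d e : ℕ)
    (V : Set (Fin e → 𝕜)) (U : Set (Fin d → 𝕜))
    (hV : IsOpen V) (hU : IsOpen U) (h0V : (0 : Fin e → 𝕜) ∈ V) (h0U : (0 : Fin d → 𝕜) ∈ U)
    (φ : (Fin e → 𝕜) → (Fin d → 𝕜))
    (hφ : ContDiffOn 𝕜 1 φ V)
    (hφopen : ∀ W ⊆ V, IsOpen W → IsOpen (φ '' W))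
    (hφmaps : Set.MapsTo φ V U) (hφ0 : φ 0 = 0)
    (f : (Fin d → 𝕜) → 𝕜) (hf : ContDiffOn 𝕜 1 f U)
    (θ C : ℝ) (hθ : 0 ≤ θ) (hC : 0 < C)
    (hloj : ∀ y ∈ V, C * ‖f (φ y)‖ ^ θ ≤ ‖fderiv 𝕜 (f ∘ φ) y‖) :
    ∃ U' ⊆ U, IsOpen U' ∧ (0 : Fin d → 𝕜) ∈ U' ∧
      ∃ C' : ℝ, 0 < C' ∧ ∀ x ∈ U', C' * ‖f x‖ ^ θ ≤ ‖fderiv 𝕜 f x‖ := by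
  -- fderiv φ is continuous on V
  have hcont : ContinuousOn (fderiv 𝕜 φ) V :=
    hφ.continuousOn_fderiv_of_isOpen hV le_rfl
  set M : ℝ := ‖fderiv 𝕜 φ 0‖ + 1 with hM
  have hMpos : 0 < M := by positivity
  -- find open W ⊆ V containing 0 with ‖fderiv φ y‖ < M on W
  have hca : ContinuousAt (fderiv 𝕜 φ) 0 :=
    hcont.continuousAt (hV.mem_nhds h0V)
  have hev : ∀ᶠ y in nhds (0 : Fin e → 𝕜), ‖fderiv 𝕜 φ y‖ < M := by
    have : ContinuousAt (fun y => ‖fderiv 𝕜 φ y‖) 0 := hca.norm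
    exact this.eventually_lt continuousAt_const (by simp [hM])
  obtain ⟨W, hWsub, hWopen, h0W⟩ :=
    mem_nhds_iff.mp (Filter.inter_mem (hV.mem_nhds h0V) hev)
  have hWV : W ⊆ V := fun y hy => (hWsub hy).1
  have hWM : ∀ y ∈ W, ‖fderiv 𝕜 φ y‖ < M := fun y hy => (hWsub hy).2
  refine ⟨φ '' W, ?_, hφopen W hWV hWopen, ⟨0, h0W, hφ0⟩, C / M, div_pos hC hMpos, ?_⟩
  · exact fun x ⟨y, hy, hxy⟩ => hxy ▸ hφmaps (hWV hy)
  rintro x ⟨y, hyW, rfl⟩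
  have hyV : y ∈ V := hWV hyW
  have hdφ : DifferentiableAt 𝕜 φ y :=
    (hφ.differentiableOn one_ne_zero).differentiableAt (hV.mem_nhds hyV)
  have hdf : DifferentiableAt 𝕜 f (φ y) :=
    (hf.differentiableOn one_ne_zero).differentiableAt (hU.mem_nhds (hφmaps hyV))
  have hchain : fderiv 𝕜 (f ∘ φ) y = (fderiv 𝕜 f (φ y)).comp (fderiv 𝕜 φ y) :=
    fderiv_comp y hdf hdφ
  have hbound : ‖fderiv 𝕜 (f ∘ φ) y‖ ≤ ‖fderiv 𝕜 f (φ y)‖ * M := by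
    rw [hchain]
    calc ‖(fderiv 𝕜 f (φ y)).comp (fderiv 𝕜 φ y)‖
        ≤ ‖fderiv 𝕜 f (φ y)‖ * ‖fderiv 𝕜 φ y‖ := ContinuousLinearMap.opNorm_comp_le _ _
      _ ≤ ‖fderiv 𝕜 f (φ y)‖ * M :=
          mul_le_mul_of_nonneg_left (hWM y hyW).le (norm_nonneg _)
  have h1 : C * ‖f (φ y)‖ ^ θ ≤ ‖fderiv 𝕜 f (φ y)‖ * M :=
    le_trans (hloj y hyV) hbound
  rw [div_mul_eq_mul_div, div_le_iff₀ hMpos]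
  linarith
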